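/- arXiv:1509.04160 — 5 statements merged into one kernel-verified Lean document; each statement's English description precedes it below -/
import Mathlib

section
/- If V and W are closed subspaces of a Hilbert space H with max{δ(V,W), δ(W,V)} < 1, then δ(V,W) = δ(W,V), and the operators P_W|V : V → W and P_V|W : W → V are isomorphisms (bounded bijections with bounded inverses). -/
set_option maxHeartbeats 1000000


/-- The orthogonal projection of `H` onto a complete subspace `W`, viewed as an
operator `H →L[ℂ] H`. -/
noncomputable def proj {H : Type*} [NormedAddCommGroup H] [InnerProductSpace ℂ H]
    (W : Submodule ℂ H) [CompleteSpace W] : H →L[ℂ] H :=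
  W.subtypeL.comp (Submodule.orthogonalProjectionOnto W)

/-- Pure real arithmetic: lower bound from Pythagoras. -/
lemma gap_real_lower {p b n c : ℝ} (hp : 0 ≤ p) (hb : 0 ≤ b) (hn : 0 ≤ n) (hc : 0 ≤ c)
    (hc1 : c ^ 2 ≤ 1) (hsplit : p ^ 2 + b ^ 2 = n ^ 2) (hbc : b ≤ c * n) :
    Real.sqrt (1 - c ^ 2) * n ≤ p := by
  have h : (Real.sqrt (1 - c ^ 2) * n) ^ 2 ≤ p ^ 2 := by
    rw [mul_pow, Real.sq_sqrt (by linarith)]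
    nlinarith
  have := Real.sqrt_le_sqrt h
  rwa [Real.sqrt_sq (by positivity), Real.sqrt_sq hp] at this

/-- Pure real arithmetic: upper bound from Pythagoras. -/
lemma gap_real_upper {a t n c : ℝ} (ha : 0 ≤ a) (hn : 0 ≤ n) (hc : 0 ≤ c)
    (hc1 : c ^ 2 ≤ 1) (hsplit : t ^ 2 + a ^ 2 = n ^ 2)
    (hlow : Real.sqrt (1 - c ^ 2) * n ≤ t) : a ≤ c * n := by
  have h2 : (Real.sqrt (1 - c ^ 2) * n) ^ 2 ≤ t ^ 2 :=
    pow_le_pow_left₀ (by positivity) hlow 2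
  rw [mul_pow, Real.sq_sqrt (by linarith)] at h2
  have h3 : a ^ 2 ≤ (c * n) ^ 2 := by rw [mul_pow]; nlinarith
  have := Real.sqrt_le_sqrt h3
  rwa [Real.sqrt_sq ha, Real.sqrt_sq (by positivity)] at this

section Aux
variable {H : Type*} [NormedAddCommGroup H] [InnerProductSpace ℂ H] [CompleteSpace H]

local notation "⟪" x ", " y "⟫" => @inner ℂ _ _ x y

/-- Pythagoras for the restricted maps. -/
lemma gap_split (V W : Submodule ℂ H) [CompleteSpace W] (v : V) :
    ‖((Submodule.orthogonalProjectionOnto W).comp V.subtypeL) v‖ ^ 2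
      + ‖((proj Wᗮ).comp V.subtypeL) v‖ ^ 2 = ‖v‖ ^ 2 := by
  have h := Submodule.norm_sq_eq_add_norm_sq_projection (𝕜 := ℂ) (v : H) W
  have h1 : ‖((proj Wᗮ).comp V.subtypeL) v‖ = ‖Submodule.orthogonalProjectionOnto Wᗮ (v : H)‖ := by
    rw [Submodule.coe_norm]; rfl
  have h2 : ‖((Submodule.orthogonalProjectionOnto W).comp V.subtypeL) v‖
      = ‖Submodule.orthogonalProjectionOnto W (v : H)‖ := rfl
  have h3 : ‖v‖ = ‖(v : H)‖ := rfl
  rw [h1, h2, h3]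
  linarith

omit [CompleteSpace H] in
lemma gap_inner (V W : Submodule ℂ H) [CompleteSpace V] [CompleteSpace W] (v : V) (w : W) :
    ⟪((Submodule.orthogonalProjectionOnto W).comp V.subtypeL) v, w⟫
      = ⟪v, ((Submodule.orthogonalProjectionOnto V).comp W.subtypeL) w⟫ := by
  simp [ContinuousLinearMap.comp_apply, Submodule.coe_inner]

/-- Lower bound for the compressed map `P_W|_V`. -/
lemma gap_lower (V W : Submodule ℂ H) [CompleteSpace V] [CompleteSpace W]
    (h1 : ‖(proj Wᗮ).comp V.subtypeL‖ < 1) (v : V) :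
    Real.sqrt (1 - ‖(proj Wᗮ).comp V.subtypeL‖ ^ 2) * ‖v‖
      ≤ ‖((Submodule.orthogonalProjectionOnto W).comp V.subtypeL) v‖ :=
  gap_real_lower (norm_nonneg _) (norm_nonneg _) (norm_nonneg _)
    (ContinuousLinearMap.opNorm_nonneg _)
    (by nlinarith [ContinuousLinearMap.opNorm_nonneg ((proj Wᗮ).comp V.subtypeL)])
    (gap_split V W v) (ContinuousLinearMap.le_opNorm _ v)

lemma gap_bijective (V W : Submodule ℂ H) [CompleteSpace V] [CompleteSpace W]
    (h1 : ‖(proj Wᗮ).comp V.subtypeL‖ < 1) (h2 : ‖(proj Vᗮ).comp W.subtypeL‖ < 1) :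
    Function.Bijective ((Submodule.orthogonalProjectionOnto W).comp V.subtypeL) := by
  set T := (Submodule.orthogonalProjectionOnto W).comp V.subtypeL with hTdef
  set A := (proj Wᗮ).comp V.subtypeL with hAdef
  have hA0 : (0:ℝ) ≤ ‖A‖ := ContinuousLinearMap.opNorm_nonneg A
  have hs : (0:ℝ) < 1 - ‖A‖ ^ 2 := by nlinarith
  have hspos : (0:ℝ) < Real.sqrt (1 - ‖A‖ ^ 2) := Real.sqrt_pos.mpr hs
  have hlow : ∀ v : V, Real.sqrt (1 - ‖A‖ ^ 2) * ‖v‖ ≤ ‖T v‖ := gap_lower V W h1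
  have hinj : Function.Injective T := by
    intro a b hab
    have h0 : T (a - b) = 0 := by rw [map_sub, hab, sub_self]
    have hl := hlow (a - b)
    rw [h0, norm_zero] at hl
    have hz : ‖a - b‖ ≤ 0 := by nlinarith [norm_nonneg (a - b)]
    rw [sub_eq_zero.mp (norm_le_zero_iff.mp hz)]
  have hanti : AntilipschitzWith (Real.sqrt (1 - ‖A‖ ^ 2))⁻¹.toNNReal T := by
    apply ContinuousLinearMap.antilipschitz_of_bound
    intro v
    rw [Real.coe_toNNReal _ (by positivity), inv_mul_eq_div,
      le_div_iff₀ hspos, mul_comm]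
    exact hlow v
  have hclosed : IsClosed (LinearMap.range (T : V →ₗ[ℂ] W) : Set W) := by
    have := hanti.isClosed_range T.uniformContinuous
    exact this
  haveI : CompleteSpace (LinearMap.range (T : V →ₗ[ℂ] W)) := hclosed.completeSpace_coe
  have hrange : LinearMap.range (T : V →ₗ[ℂ] W) = ⊤ := by
    rw [← Submodule.orthogonal_eq_bot_iff, Submodule.eq_bot_iff]
    intro w hw
    have hwV : (w : H) ∈ Vᗮ := by
      rw [Submodule.mem_orthogonal]
      intro u hu
      have h0 := hw (T ⟨u, hu⟩) (LinearMap.mem_range_self _ _)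
      calc ⟪u, (w:H)⟫ = ⟪T ⟨u, hu⟩, w⟫ := by
            simp [hTdef, Submodule.coe_inner]
        _ = 0 := h0
    have heq : (Submodule.orthogonalProjectionOnto Vᗮ (w : H) : H) = (w : H) :=
      Submodule.starProjection_eq_self_iff.mpr hwV
    have hb : ‖((proj Vᗮ).comp W.subtypeL) w‖ = ‖w‖ := by
      rw [Submodule.coe_norm]
      show ‖(Submodule.orthogonalProjectionOnto Vᗮ (w:H) : H)‖ = ‖(w:H)‖
      rw [heq]
    have hle := ((proj Vᗮ).comp W.subtypeL).le_opNorm w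
    rw [hb] at hle
    have hz : ‖w‖ ≤ 0 := by nlinarith [norm_nonneg w]
    exact norm_le_zero_iff.mp hz
  exact ⟨hinj, LinearMap.range_eq_top.mp hrange⟩

end Aux

section Aux3
variable {H : Type*} [NormedAddCommGroup H] [InnerProductSpace ℂ H] [CompleteSpace H]

local notation "⟪" x ", " y "⟫" => @inner ℂ _ _ x y

/-- The key cross lower bound: `P_W|_V` is bounded below by `√(1 - δ(W,V)²)`. -/
lemma gap_lower_cross (V W : Submodule ℂ H) [CompleteSpace V] [CompleteSpace W]
    (h1 : ‖(proj Wᗮ).comp V.subtypeL‖ < 1) (h2 : ‖(proj Vᗮ).comp W.subtypeL‖ < 1) (v : V) :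
    Real.sqrt (1 - ‖(proj Vᗮ).comp W.subtypeL‖ ^ 2) * ‖v‖
      ≤ ‖((Submodule.orthogonalProjectionOnto W).comp V.subtypeL) v‖ := by
  set T := (Submodule.orthogonalProjectionOnto W).comp V.subtypeL with hTdef
  set S := (Submodule.orthogonalProjectionOnto V).comp W.subtypeL with hSdef
  set B := (proj Vᗮ).comp W.subtypeL with hBdef
  have hbT := gap_bijective V W h1 h2
  have hbS := gap_bijective W V h2 h1
  set s := Real.sqrt (1 - ‖B‖ ^ 2) with hsdef
  have hB0 : (0:ℝ) ≤ ‖B‖ := ContinuousLinearMap.opNorm_nonneg B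
  have hs : (0:ℝ) < 1 - ‖B‖ ^ 2 := by nlinarith
  have hspos : (0:ℝ) < s := Real.sqrt_pos.mpr hs
  have hSlow : ∀ w : W, s * ‖w‖ ≤ ‖S w‖ := gap_lower W V h2
  let e : V ≃L[ℂ] W := ContinuousLinearEquiv.ofBijective T
    (LinearMap.ker_eq_bot.mpr hbT.1) (LinearMap.range_eq_top.mpr hbT.2)
  let f : W ≃L[ℂ] V := ContinuousLinearEquiv.ofBijective S
    (LinearMap.ker_eq_bot.mpr hbS.1) (LinearMap.range_eq_top.mpr hbS.2)
  have hadj : (f.symm : V →L[ℂ] W) = ContinuousLinearMap.adjoint (e.symm : W →L[ℂ] V) := by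
    rw [ContinuousLinearMap.eq_adjoint_iff]
    intro x y
    have hx : S ((f.symm : V →L[ℂ] W) x) = x := f.apply_symm_apply x
    have hy : T ((e.symm : W →L[ℂ] V) y) = y := e.apply_symm_apply y
    calc ⟪(f.symm : V →L[ℂ] W) x, y⟫
        = ⟪(f.symm : V →L[ℂ] W) x, T ((e.symm : W →L[ℂ] V) y)⟫ := by rw [hy]
      _ = starRingEnd ℂ ⟪T ((e.symm : W →L[ℂ] V) y), (f.symm : V →L[ℂ] W) x⟫ :=
          (inner_conj_symm _ _).symm
      _ = starRingEnd ℂ ⟪(e.symm : W →L[ℂ] V) y, S ((f.symm : V →L[ℂ] W) x)⟫ := by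
          rw [gap_inner]
      _ = ⟪S ((f.symm : V →L[ℂ] W) x), (e.symm : W →L[ℂ] V) y⟫ := inner_conj_symm _ _
      _ = ⟪x, (e.symm : W →L[ℂ] V) y⟫ := by rw [hx]
  have hnorm : ‖(f.symm : V →L[ℂ] W)‖ = ‖(e.symm : W →L[ℂ] V)‖ := by
    rw [hadj]; exact LinearIsometryEquiv.norm_map _ _
  have hf' : ‖(f.symm : V →L[ℂ] W)‖ ≤ s⁻¹ := by
    apply ContinuousLinearMap.opNorm_le_bound _ (by positivity)
    intro x
    have hx : S ((f.symm : V →L[ℂ] W) x) = x := f.apply_symm_apply x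
    have hl := hSlow ((f.symm : V →L[ℂ] W) x)
    rw [hx] at hl
    rw [inv_mul_eq_div, le_div_iff₀ hspos, mul_comm]
    exact hl
  have he' : ‖(e.symm : W →L[ℂ] V)‖ ≤ s⁻¹ := hnorm ▸ hf'
  have h0 : (e.symm : W →L[ℂ] V) (T v) = v := e.symm_apply_apply v
  have hb : ‖v‖ ≤ s⁻¹ * ‖T v‖ := by
    calc ‖v‖ = ‖(e.symm : W →L[ℂ] V) (T v)‖ := by rw [h0]
      _ ≤ ‖(e.symm : W →L[ℂ] V)‖ * ‖T v‖ := ContinuousLinearMap.le_opNorm _ _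
      _ ≤ s⁻¹ * ‖T v‖ := mul_le_mul_of_nonneg_right he' (norm_nonneg _)
  have hfin := mul_le_mul_of_nonneg_left hb hspos.le
  rwa [← mul_assoc, mul_inv_cancel₀ hspos.ne', one_mul] at hfin

lemma gap_le (V W : Submodule ℂ H) [CompleteSpace V] [CompleteSpace W]
    (h1 : ‖(proj Wᗮ).comp V.subtypeL‖ < 1) (h2 : ‖(proj Vᗮ).comp W.subtypeL‖ < 1) :
    ‖(proj Wᗮ).comp V.subtypeL‖ ≤ ‖(proj Vᗮ).comp W.subtypeL‖ := by
  have hB0 : (0:ℝ) ≤ ‖(proj Vᗮ).comp W.subtypeL‖ := ContinuousLinearMap.opNorm_nonneg _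
  apply ContinuousLinearMap.opNorm_le_bound _ hB0
  intro v
  exact gap_real_upper (norm_nonneg _) (norm_nonneg _) hB0 (by nlinarith)
    (gap_split V W v) (gap_lower_cross V W h1 h2 v)

end Aux3

/-- If `Δ(V,W) = max{δ(V,W), δ(W,V)} < 1`, then `δ(V,W) = δ(W,V)` and the operators
`P_W|V : V → W` and `P_V|W : W → V` are isomorphisms. -/
theorem gap_eq_and_bijective_of_maxGap_lt_one
    {H : Type*} [NormedAddCommGroup H] [InnerProductSpace ℂ H]
    [CompleteSpace H] (V W : Submodule ℂ H) [CompleteSpace V] [CompleteSpace W]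
    (hgap : max ‖(proj Wᗮ).comp V.subtypeL‖ ‖(proj Vᗮ).comp W.subtypeL‖ < 1) :
    ‖(proj Wᗮ).comp V.subtypeL‖ = ‖(proj Vᗮ).comp W.subtypeL‖ ∧
    Function.Bijective ((Submodule.orthogonalProjectionOnto W).comp V.subtypeL) ∧
    Function.Bijective ((Submodule.orthogonalProjectionOnto V).comp W.subtypeL) := by
  rw [max_lt_iff] at hgap
  obtain ⟨h1, h2⟩ := hgap
  exact ⟨le_antisymm (gap_le V W h1 h2) (gap_le W V h2 h1),
    gap_bijective V W h1 h2, gap_bijective W V h2 h1⟩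
end

section
/- Let X, Y be Hilbert spaces and T, S ∈ B(X,Y). If there exists c > 0 such that ‖Tx‖ ≥ c‖x‖ for all x ∈ (ker T)^⊥, then ran T is closed and the gap from ran T to the closure of ran S satisfies δ(ran T, cl(ran S)) ≤ ‖T - S‖/c. -/
/-- If `T, S ∈ B(X,Y)` and `‖Tx‖ ≥ c‖x‖` for all `x ∈ (ker T)ᗮ` (with `c > 0`), then
`ran T` is closed and the gap from `ran T` to the closure of `ran S` satisfies
`δ(ran T, cl ran S) = sup{dist(v, cl ran S) : v ∈ ran T, ‖v‖ = 1} ≤ ‖T - S‖ / c`. -/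
theorem range_closed_and_gap_le {X Y : Type*}
    [NormedAddCommGroup X] [InnerProductSpace ℂ X] [CompleteSpace X]
    [NormedAddCommGroup Y] [InnerProductSpace ℂ Y] [CompleteSpace Y]
    (T S : X →L[ℂ] Y) (c : ℝ) (hc : 0 < c)
    (hbelow : ∀ x ∈ (LinearMap.ker (T : X →ₗ[ℂ] Y))ᗮ, c * ‖x‖ ≤ ‖T x‖) :
    IsClosed (Set.range T) ∧
    ∀ y ∈ Set.range T, ‖y‖ = 1 →
      Metric.infDist y (closure (Set.range S)) ≤ ‖T - S‖ / c := by
  set K : Submodule ℂ X := (LinearMap.ker (T : X →ₗ[ℂ] Y))ᗮ with hK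
  haveI : CompleteSpace (LinearMap.ker (T : X →ₗ[ℂ] Y)) :=
    (ContinuousLinearMap.isClosed_ker T).completeSpace_coe
  haveI : CompleteSpace K := (Submodule.isClosed_orthogonal _).completeSpace_coe
  -- key decomposition: every y in range T is T x for some x ∈ K with c‖x‖ ≤ ‖y‖
  have key : ∀ y ∈ Set.range T, ∃ x : X, x ∈ K ∧ T x = y := by
    rintro y ⟨x₀, rfl⟩
    refine ⟨(K.orthogonalProjectionOnto x₀ : X), (K.orthogonalProjectionOnto x₀).2, ?_⟩
    have hmem : x₀ - (K.orthogonalProjectionOnto x₀ : X) ∈ Kᗮ :=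
      K.sub_starProjection_mem_orthogonal x₀
    have hmem2 : x₀ - (K.orthogonalProjectionOnto x₀ : X) ∈ LinearMap.ker (T : X →ₗ[ℂ] Y) :=
      (Submodule.orthogonal_orthogonal (LinearMap.ker (T : X →ₗ[ℂ] Y))).le hmem
    have : T (x₀ - (K.orthogonalProjectionOnto x₀ : X)) = 0 := hmem2
    rw [map_sub, sub_eq_zero] at this
    exact this.symm
  -- the restriction of T to K
  set T' : K →L[ℂ] Y := T.comp K.subtypeL with hT'
  have hrange : Set.range T' = Set.range T := by
    apply Set.Subset.antisymm
    · rintro y ⟨x, rfl⟩; exact ⟨x, rfl⟩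
    · rintro y hy
      obtain ⟨x, hxK, hx⟩ := key y hy
      exact ⟨⟨x, hxK⟩, hx⟩
  have hanti : AntilipschitzWith (⟨c, hc.le⟩ : NNReal)⁻¹ T' := by
    refine ContinuousLinearMap.antilipschitz_of_bound T' ?_
    intro x
    have := hbelow x x.2
    show ‖x‖ ≤ c⁻¹ * ‖T' x‖
    rw [inv_mul_eq_div, le_div_iff₀ hc, mul_comm]
    exact this
  constructor
  · rw [← hrange]
    exact hanti.isClosed_range T'.uniformContinuous
  · intro y hy hy1
    obtain ⟨x, hxK, hx⟩ := key y hy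
    have hxle : ‖x‖ ≤ 1 / c := by
      rw [le_div_iff₀ hc, mul_comm]
      calc c * ‖x‖ ≤ ‖T x‖ := hbelow x hxK
        _ = 1 := by rw [hx, hy1]
    have hS : S x ∈ closure (Set.range S) := subset_closure ⟨x, rfl⟩
    calc Metric.infDist y (closure (Set.range S)) ≤ dist y (S x) :=
          Metric.infDist_le_dist_of_mem hS
      _ = ‖(T - S) x‖ := by rw [dist_eq_norm, ← hx]; simp
      _ ≤ ‖T - S‖ * ‖x‖ := (T - S).le_opNorm x
      _ ≤ ‖T - S‖ * (1 / c) := by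
          exact mul_le_mul_of_nonneg_left hxle (norm_nonneg _)
      _ = ‖T - S‖ / c := by ring
end

section
/- Let P and Q be orthogonal projections on a Hilbert space H and c, d > 0. Then ‖P - Q‖ ≤ √(1/c² + 1/d²) · ‖cP - dQ‖. -/
open scoped ComplexInnerProductSpace in
private lemma proj_contract {H : Type*} [NormedAddCommGroup H] [InnerProductSpace ℂ H]
    [CompleteSpace H] (R : H →L[ℂ] H) (h1 : IsIdempotentElem R) (h2 : IsSelfAdjoint R) (x : H) :
    ‖R x‖ ≤ ‖x‖ := by
  have hsym : ∀ y z : H, ⟪R y, z⟫ = ⟪y, R z⟫ := fun y z =>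
    (ContinuousLinearMap.isSelfAdjoint_iff_isSymmetric.mp h2) y z
  have hRR : R (R x) = R x := by
    rw [← ContinuousLinearMap.mul_apply, h1.eq]
  have h3 : (‖R x‖ : ℝ) ^ 2 = RCLike.re (⟪x, R x⟫ : ℂ) := by
    rw [← @inner_self_eq_norm_sq ℂ, hsym x (R x), hRR]
  have h4 : RCLike.re (⟪x, R x⟫ : ℂ) ≤ ‖x‖ * ‖R x‖ := by
    calc RCLike.re (⟪x, R x⟫ : ℂ) ≤ ‖(⟪x, R x⟫ : ℂ)‖ := RCLike.re_le_norm _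
    _ ≤ ‖x‖ * ‖R x‖ := norm_inner_le_norm _ _
  nlinarith [norm_nonneg (R x), norm_nonneg x]

/-- If `P` and `Q` are orthogonal projections (self-adjoint idempotents) on a Hilbert
space `H` and `c, d > 0`, then `‖P - Q‖ ≤ √(1/c² + 1/d²) · ‖cP - dQ‖`. -/
theorem norm_sub_proj_le {H : Type*} [NormedAddCommGroup H] [InnerProductSpace ℂ H]
    [CompleteSpace H] (P Q : H →L[ℂ] H)
    (hP1 : IsIdempotentElem P) (hP2 : IsSelfAdjoint P)
    (hQ1 : IsIdempotentElem Q) (hQ2 : IsSelfAdjoint Q)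
    (c d : ℝ) (hc : 0 < c) (hd : 0 < d) :
    ‖P - Q‖ ≤ Real.sqrt (1 / c ^ 2 + 1 / d ^ 2) * ‖(c : ℂ) • P - (d : ℂ) • Q‖ := by
  set A : H →L[ℂ] H := (c : ℂ) • P - (d : ℂ) • Q with hA
  have hs : (0:ℝ) < 1 / c ^ 2 + 1 / d ^ 2 := by positivity
  apply ContinuousLinearMap.opNorm_le_bound
  · positivity
  intro x
  set v : H := P x - Q x with hv
  have hvx : (P - Q) x = v := rfl
  rw [hvx]
  -- basic idempotent application facts
  have hPP : ∀ y : H, P (P y) = P y := fun y => by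
    rw [← ContinuousLinearMap.mul_apply, hP1.eq]
  have hQQ : ∀ y : H, Q (Q y) = Q y := fun y => by
    rw [← ContinuousLinearMap.mul_apply, hQ1.eq]
  -- key identities
  have id1 : (c : ℂ) • (P v) = A (x - Q x) := by
    simp only [hA, hv, ContinuousLinearMap.sub_apply, ContinuousLinearMap.smul_apply,
      map_sub, map_smul, hPP, hQQ]
    module
  have id2 : (d : ℂ) • (v - P v) = A x - P (A x) := by
    simp only [hA, hv, ContinuousLinearMap.sub_apply, ContinuousLinearMap.smul_apply,
      map_sub, map_smul, hPP, hQQ]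
    module
  -- Pythagoras
  have hsymP : ∀ y z : H, (inner ℂ (P y) z : ℂ) = inner ℂ y (P z) := fun y z =>
    (ContinuousLinearMap.isSelfAdjoint_iff_isSymmetric.mp hP2) y z
  have horth : (inner ℂ (P v) (v - P v) : ℂ) = 0 := by
    rw [hsymP, map_sub, hPP, sub_self, inner_zero_right]
  have hpyth : ‖v‖ ^ 2 = ‖P v‖ ^ 2 + ‖v - P v‖ ^ 2 := by
    have h := norm_add_sq (𝕜 := ℂ) (P v) (v - P v)
    rw [horth] at h
    simpa using h
  -- contraction bounds
  have h1mQ : ‖x - Q x‖ ≤ ‖x‖ := by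
    have hi : IsIdempotentElem (1 - Q) := hQ1.one_sub
    have hsa : IsSelfAdjoint ((1 : H →L[ℂ] H) - Q) := (IsSelfAdjoint.one _).sub hQ2
    simpa using proj_contract (1 - Q) hi hsa x
  have h1mP : ∀ y : H, ‖y - P y‖ ≤ ‖y‖ := fun y => by
    have hi : IsIdempotentElem (1 - P) := hP1.one_sub
    have hsa : IsSelfAdjoint ((1 : H →L[ℂ] H) - P) := (IsSelfAdjoint.one _).sub hP2
    simpa using proj_contract (1 - P) hi hsa y
  -- norm bounds on the pieces
  have hb1 : c * ‖P v‖ ≤ ‖A‖ * ‖x‖ := by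
    have : ‖(c : ℂ) • (P v)‖ = c * ‖P v‖ := by
      rw [norm_smul, Complex.norm_real, Real.norm_of_nonneg hc.le]
    rw [← this, id1]
    calc ‖A (x - Q x)‖ ≤ ‖A‖ * ‖x - Q x‖ := A.le_opNorm _
    _ ≤ ‖A‖ * ‖x‖ := by gcongr
  have hb2 : d * ‖v - P v‖ ≤ ‖A‖ * ‖x‖ := by
    have : ‖(d : ℂ) • (v - P v)‖ = d * ‖v - P v‖ := by
      rw [norm_smul, Complex.norm_real, Real.norm_of_nonneg hd.le]
    rw [← this, id2]
    calc ‖A x - P (A x)‖ ≤ ‖A x‖ := h1mP (A x)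
    _ ≤ ‖A‖ * ‖x‖ := A.le_opNorm _
  -- combine
  have hsq : ‖v‖ ^ 2 ≤ (1 / c ^ 2 + 1 / d ^ 2) * (‖A‖ * ‖x‖) ^ 2 := by
    have e1 : ‖P v‖ ^ 2 ≤ (1 / c ^ 2) * (‖A‖ * ‖x‖) ^ 2 := by
      rw [div_mul_eq_mul_div, le_div_iff₀ (by positivity), one_mul]
      nlinarith [pow_le_pow_left₀ (by positivity) hb1 2, norm_nonneg (P v)]
    have e2 : ‖v - P v‖ ^ 2 ≤ (1 / d ^ 2) * (‖A‖ * ‖x‖) ^ 2 := by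
      rw [div_mul_eq_mul_div, le_div_iff₀ (by positivity), one_mul]
      nlinarith [pow_le_pow_left₀ (by positivity) hb2 2, norm_nonneg (v - P v)]
    rw [hpyth]; linarith [e1, e2]
  have hrhs : (0:ℝ) ≤ Real.sqrt (1 / c ^ 2 + 1 / d ^ 2) * ‖A‖ * ‖x‖ := by positivity
  nlinarith [Real.sq_sqrt hs.le, Real.sqrt_nonneg (1 / c ^ 2 + 1 / d ^ 2),
    norm_nonneg v, hsq, hrhs, sq_nonneg (‖v‖ - Real.sqrt (1 / c ^ 2 + 1 / d ^ 2) * ‖A‖ * ‖x‖),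
    sq_nonneg (‖v‖ + Real.sqrt (1 / c ^ 2 + 1 / d ^ 2) * ‖A‖ * ‖x‖)]
end

section
/- Let A = (A_i)_{i∈I} be an operator-valued frame sequence in B(H,K) with frame operator S_A and H_A = closed span of ⋃ ran A_i*. Then the set of dual analysis operators D(A) = {T ∈ B(H, ℓ²(I,K)) : T* T_A = P_A, ran T* ⊂ H_A} equals {(T_A (S_A|H_A)^{-1} + L) P_A : L ∈ B(H_A, ℓ²(I,K)), L* T_A = 0}. -/
open ContinuousLinearMap

set_option maxHeartbeats 1000000 in
/-- Parametrization of the duals of an operator-valued frame sequence with analysis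
operator `T_A`: the set `D(A) = {T : T* T_A = P_A, ran T* ⊂ H_A}` equals
`{(T_A (S_A|H_A)⁻¹ + L) P_A : L ∈ B(H_A, ℓ²(I,K)), L* T_A = 0}`, where
`G = (S_A|H_A)⁻¹ P_A`. -/
theorem duals_eq_parametrization {H K : Type*}
    [NormedAddCommGroup H] [InnerProductSpace ℂ H] [CompleteSpace H]
    [NormedAddCommGroup K] [InnerProductSpace ℂ K] [CompleteSpace K]
    {I : Type*} [Countable I] (TA : H →L[ℂ] lp (fun _ : I => K) 2)
    (HA : Submodule ℂ H) [CompleteSpace HA]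
    (hHA : HA = (LinearMap.range (adjoint TA).toLinearMap).topologicalClosure)
    (α : ℝ) (hα : 0 < α) (hframe : ∀ x ∈ HA, α * ‖x‖ ^ 2 ≤ ‖TA x‖ ^ 2)
    (G : H →L[ℂ] H)
    (hGran : ∀ x : H, G x ∈ HA)
    (hGinv : ∀ x : H, (adjoint TA) (TA (G x)) = proj HA x)
    (hGker : ∀ x ∈ HAᗮ, G x = 0) :
    {T : H →L[ℂ] lp (fun _ : I => K) 2 |
        (adjoint T).comp TA = proj HA ∧ ∀ y, adjoint T y ∈ HA} =
    {T : H →L[ℂ] lp (fun _ : I => K) 2 |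
        ∃ L : HA →L[ℂ] lp (fun _ : I => K) 2,
          (adjoint L).comp TA = 0 ∧
          T = TA.comp G + L.comp (Submodule.orthogonalProjectionOnto HA)} := by
  -- Lemma A: G* TA* TA = proj HA
  have hA : ∀ x : H, adjoint G (adjoint TA (TA x)) = proj HA x := by
    intro x
    have h1 : (adjoint TA).comp (TA.comp G) = proj HA := by
      ext z; exact hGinv z
    have h2 : adjoint ((adjoint TA).comp (TA.comp G)) = adjoint (proj HA) := by
      rw [h1]
    rw [adjoint_comp, adjoint_comp, adjoint_adjoint] at h2
    have h3 : adjoint (proj HA) = proj HA := (isSelfAdjoint_starProjection HA).adjoint_eq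
    rw [h3] at h2
    calc adjoint G (adjoint TA (TA x)) = ((adjoint G).comp ((adjoint TA).comp TA)) x := rfl
      _ = proj HA x := by rw [← comp_assoc, h2]
  -- Lemma B: G kills the orthogonal complement contribution
  have hB : ∀ x : H, G ((Submodule.orthogonalProjectionOnto HA x : H)) = G x := by
    intro x
    have hmem : x - (Submodule.orthogonalProjectionOnto HA x : H) ∈ HAᗮ :=
      Submodule.sub_starProjection_mem_orthogonal (K := HA) x
    have h0 := hGker _ hmem
    rw [map_sub, sub_eq_zero] at h0
    exact h0.symm
  -- Lemma D: ran G* ⊆ HA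
  have hD : ∀ y : H, adjoint G y ∈ HA := by
    intro y
    have hmem : adjoint G y ∈ HAᗮᗮ := by
      intro q hq
      rw [inner_eq_zero_symm]
      calc (inner ℂ (adjoint G y) q : ℂ) = inner ℂ y (G q) := adjoint_inner_left G q y
        _ = inner ℂ y (0 : H) := by rw [hGker q hq]
        _ = 0 := inner_zero_right y
    rwa [Submodule.orthogonal_orthogonal] at hmem
  ext T
  simp only [Set.mem_setOf_eq]
  constructor
  · rintro ⟨h1, h2⟩
    -- T vanishes on HAᗮ
    have hC : ∀ q ∈ HAᗮ, T q = 0 := by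
      intro q hq
      have hz : (inner ℂ (T q) (T q) : ℂ) = 0 := by
        rw [← adjoint_inner_left]
        exact (HA.mem_orthogonal q).mp hq _ (h2 (T q))
      exact (inner_self_eq_zero (𝕜 := ℂ)).mp hz
    refine ⟨(T - TA.comp G).comp HA.subtypeL, ?_, ?_⟩
    · apply ContinuousLinearMap.ext; intro x
      show adjoint ((T - TA.comp G).comp HA.subtypeL) (TA x) = 0
      refine (inner_self_eq_zero (𝕜 := ℂ)).mp ?_
      set u := adjoint ((T - TA.comp G).comp HA.subtypeL) (TA x) with hu
      have e1 : adjoint T (TA x) = proj HA x := congrFun (congrArg DFunLike.coe h1) x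
      calc (inner ℂ u u : ℂ)
          = inner ℂ (TA x) (((T - TA.comp G).comp HA.subtypeL) u) := adjoint_inner_left _ u (TA x)
        _ = inner ℂ (TA x) (T (u : H)) - inner ℂ (TA x) (TA (G (u : H))) := by
            simp [comp_apply, sub_apply, inner_sub_right, Submodule.subtypeL_apply]
        _ = inner ℂ (adjoint T (TA x)) (u : H) - inner ℂ (adjoint G (adjoint TA (TA x))) (u : H) := by
            rw [adjoint_inner_left, adjoint_inner_left, adjoint_inner_left]
        _ = 0 := by rw [e1, hA, sub_self]
    · apply ContinuousLinearMap.ext; intro x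
      have hTx : T x = T ((Submodule.orthogonalProjectionOnto HA x : H)) := by
        have hmem : x - (Submodule.orthogonalProjectionOnto HA x : H) ∈ HAᗮ :=
          Submodule.sub_starProjection_mem_orthogonal (K := HA) x
        have hz := hC _ hmem
        rw [map_sub, sub_eq_zero] at hz
        exact hz
      show T x = (TA.comp G + ((T - TA.comp G).comp HA.subtypeL).comp (Submodule.orthogonalProjectionOnto HA)) x
      simp only [add_apply, comp_apply, sub_apply, Submodule.subtypeL_apply]
      rw [hB x, hTx]
      abel
  · rintro ⟨L, hL, hT⟩
    have hadj : ∀ y, adjoint T y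
        = adjoint G (adjoint TA y) + (adjoint L y : H) := by
      intro y
      simp only [hT, map_add, adjoint_comp, add_apply, comp_apply,
        HA.adjoint_orthogonalProjectionOnto, Submodule.subtypeL_apply]
    constructor
    · apply ContinuousLinearMap.ext; intro x
      have hL0 : adjoint L (TA x) = 0 := by
        have hz := congrFun (congrArg DFunLike.coe hL) x
        simpa using hz
      show adjoint T (TA x) = proj HA x
      rw [hadj (TA x), hA, hL0]
      simp
    · intro y
      rw [hadj y]
      exact HA.add_mem (hD _) (adjoint L y).2
end

section
/- Let A be a B(H,K)-valued frame for H with lower frame bound α, and let B be a μ-perturbation of A where μ < √α. Then B is an operator-valued frame for H, and the canonical duals satisfy ‖T_{Ã} - T_{B̃}‖ ≤ 2μ/(√α(√α - μ)), where T_{Ã} = T_A S_A^{-1} and T_{B̃} = T_B S_B^{-1}. -/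
open ContinuousLinearMap

section Aux

variable {H E : Type*}
  [NormedAddCommGroup H] [InnerProductSpace ℂ H] [CompleteSpace H]
  [NormedAddCommGroup E] [InnerProductSpace ℂ E] [CompleteSpace E]

local notation "⟪" x ", " y "⟫" => @inner ℂ _ _ x y

private lemma le_of_sq_le_sq' {a b : ℝ} (ha : 0 ≤ a) (hb : 0 ≤ b) (h : a ^ 2 ≤ b ^ 2) :
    a ≤ b := by nlinarith

/-- Lower bound on `S = T† T` from a lower bound on `T`. -/
private lemma lb_S {T : H →L[ℂ] E} {c : ℝ} (hc : 0 < c) (h : ∀ x, c * ‖x‖ ≤ ‖T x‖) (x : H) :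
    c ^ 2 * ‖x‖ ≤ ‖((adjoint T).comp T) x‖ := by
  rcases eq_or_ne x 0 with rfl | hx
  · simp
  have hx' : 0 < ‖x‖ := norm_pos_iff.mpr hx
  have h1 : c ^ 2 * ‖x‖ ^ 2 ≤ ‖T x‖ ^ 2 := by
    have := pow_le_pow_left₀ (by positivity : (0:ℝ) ≤ c * ‖x‖) (h x) 2
    rwa [mul_pow] at this
  have h2 : ‖T x‖ ^ 2 = RCLike.re ⟪((adjoint T).comp T) x, x⟫ :=
    apply_norm_sq_eq_inner_adjoint_left T x
  have h3 : RCLike.re ⟪((adjoint T).comp T) x, x⟫ ≤ ‖((adjoint T).comp T) x‖ * ‖x‖ := by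
    calc RCLike.re ⟪((adjoint T).comp T) x, x⟫ ≤ ‖⟪((adjoint T).comp T) x, x⟫‖ :=
          RCLike.re_le_norm _
      _ ≤ _ := norm_inner_le_norm _ _
  have h4 := h1.trans (h2.le.trans h3)
  rw [pow_two, mul_assoc] at h4 ⊢
  rw [pow_two] at h4
  nlinarith

private lemma isUnit_S {T : H →L[ℂ] E} {c : ℝ} (hc : 0 < c) (h : ∀ x, c * ‖x‖ ≤ ‖T x‖) :
    IsUnit ((adjoint T).comp T) := by
  set S := (adjoint T).comp T with hS
  have hlb := lb_S hc h
  have hc2 : 0 < c ^ 2 := by positivity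
  have hanti : AntilipschitzWith ((c ^ 2)⁻¹).toNNReal S := by
    refine ContinuousLinearMap.antilipschitz_of_bound S fun x => ?_
    rw [Real.coe_toNNReal _ (by positivity)]
    rw [inv_mul_eq_div, le_div_iff₀ hc2, mul_comm]
    exact hlb x
  have hinj : LinearMap.ker (S : H →ₗ[ℂ] H) = ⊥ := LinearMap.ker_eq_bot.mpr hanti.injective
  have hclosed : IsClosed (Set.range S) := hanti.isClosed_range S.uniformContinuous
  have hrange : LinearMap.range (S : H →ₗ[ℂ] H) = ⊤ := by
    have hcl : IsClosed ((LinearMap.range (S : H →ₗ[ℂ] H) : Submodule ℂ H) : Set H) := by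
      simpa [LinearMap.coe_range] using hclosed
    haveI : CompleteSpace (LinearMap.range (S : H →ₗ[ℂ] H)) := hcl.completeSpace_coe
    rw [← Submodule.orthogonal_eq_bot_iff]
    rw [Submodule.eq_bot_iff]
    intro y hy
    have h0 : ⟪S y, y⟫ = 0 := hy (S y) (LinearMap.mem_range_self _ y)
    have : ‖T y‖ ^ 2 = 0 := by
      rw [apply_norm_sq_eq_inner_adjoint_left T y, ← hS, h0, map_zero]
    have hTy : ‖T y‖ = 0 := by nlinarith [norm_nonneg (T y)]
    have := h y
    rw [hTy] at this
    have : ‖y‖ ≤ 0 := by nlinarith [norm_nonneg y]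
    simpa using norm_le_zero_iff.mp this
  let e := ContinuousLinearEquiv.ofBijective S hinj hrange
  have hco : ∀ y, e y = S y := fun y =>
    congrFun (ContinuousLinearEquiv.coeFn_ofBijective S hinj hrange) y
  refine ⟨⟨S, (e.symm : H →L[ℂ] H), ?_, ?_⟩, rfl⟩
  · ext x
    simp only [ContinuousLinearMap.mul_apply, ContinuousLinearMap.one_apply,
      ContinuousLinearEquiv.coe_coe]
    rw [← hco, e.apply_symm_apply]
  · ext x
    simp only [ContinuousLinearMap.mul_apply, ContinuousLinearMap.one_apply,
      ContinuousLinearEquiv.coe_coe]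
    rw [← hco, e.symm_apply_apply]

private lemma S_inv_cancel_right {T : H →L[ℂ] E} {c : ℝ} (hc : 0 < c)
    (h : ∀ x, c * ‖x‖ ≤ ‖T x‖) (y : H) :
    ((adjoint T).comp T) (Ring.inverse ((adjoint T).comp T) y) = y := by
  have e1 : (adjoint T).comp T * Ring.inverse ((adjoint T).comp T) = 1 :=
    Ring.mul_inverse_cancel _ (isUnit_S hc h)
  have := congrArg (fun f : H →L[ℂ] H => f y) e1
  simpa [ContinuousLinearMap.mul_apply] using this

private lemma S_inv_cancel_left {T : H →L[ℂ] E} {c : ℝ} (hc : 0 < c)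
    (h : ∀ x, c * ‖x‖ ≤ ‖T x‖) (y : H) :
    Ring.inverse ((adjoint T).comp T) (((adjoint T).comp T) y) = y := by
  have e1 : Ring.inverse ((adjoint T).comp T) * ((adjoint T).comp T) = 1 :=
    Ring.inverse_mul_cancel _ (isUnit_S hc h)
  have := congrArg (fun f : H →L[ℂ] H => f y) e1
  simpa [ContinuousLinearMap.mul_apply] using this

private lemma inv_apply_bound {T : H →L[ℂ] E} {c : ℝ} (hc : 0 < c)
    (h : ∀ x, c * ‖x‖ ≤ ‖T x‖) (y : H) :
    ‖Ring.inverse ((adjoint T).comp T) y‖ ≤ (c ^ 2)⁻¹ * ‖y‖ := by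
  have hlb := lb_S hc h (Ring.inverse ((adjoint T).comp T) y)
  rw [S_inv_cancel_right hc h y] at hlb
  rw [inv_mul_eq_div, le_div_iff₀ (by positivity)]
  linarith

private lemma TSinv_apply_bound {T : H →L[ℂ] E} {c : ℝ} (hc : 0 < c)
    (h : ∀ x, c * ‖x‖ ≤ ‖T x‖) (y : H) :
    ‖T (Ring.inverse ((adjoint T).comp T) y)‖ ≤ c⁻¹ * ‖y‖ := by
  have hsq : ‖T (Ring.inverse ((adjoint T).comp T) y)‖ ^ 2 =
      RCLike.re ⟪Ring.inverse ((adjoint T).comp T) y, y⟫ := by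
    rw [apply_norm_sq_eq_inner_adjoint_right]
    rw [show ((adjoint T) ∘L T) (Ring.inverse ((adjoint T).comp T) y) = y from
      S_inv_cancel_right hc h y]
  have h1 : RCLike.re ⟪Ring.inverse ((adjoint T).comp T) y, y⟫ ≤ (c ^ 2)⁻¹ * ‖y‖ * ‖y‖ := by
    calc RCLike.re ⟪Ring.inverse ((adjoint T).comp T) y, y⟫
        ≤ ‖⟪Ring.inverse ((adjoint T).comp T) y, y⟫‖ := RCLike.re_le_norm _
      _ ≤ ‖Ring.inverse ((adjoint T).comp T) y‖ * ‖y‖ := norm_inner_le_norm _ _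
      _ ≤ (c ^ 2)⁻¹ * ‖y‖ * ‖y‖ := by
          have := inv_apply_bound hc h y
          have h0 : (0:ℝ) ≤ ‖y‖ := norm_nonneg _
          nlinarith
  refine le_of_sq_le_sq' (norm_nonneg _) (by positivity) ?_
  rw [mul_pow, ← hsq] at *
  calc ‖T (Ring.inverse ((adjoint T).comp T) y)‖ ^ 2 ≤ (c ^ 2)⁻¹ * ‖y‖ * ‖y‖ := by
        rw [hsq]; exact h1
    _ = c⁻¹ ^ 2 * ‖y‖ ^ 2 := by rw [inv_pow]; ring

private lemma proj_apply_bound {T : H →L[ℂ] E} {c : ℝ} (hc : 0 < c)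
    (h : ∀ x, c * ‖x‖ ≤ ‖T x‖) (y : E) :
    ‖y - T (Ring.inverse ((adjoint T).comp T) (adjoint T y))‖ ≤ ‖y‖ := by
  set w : H := Ring.inverse ((adjoint T).comp T) (adjoint T y) with hw
  have hTw : adjoint T (T w) = adjoint T y := by
    have := S_inv_cancel_right hc h (adjoint T y)
    simpa [ContinuousLinearMap.comp_apply] using this
  have h5 : ⟪T w, y⟫ = ⟪w, adjoint T y⟫ := (adjoint_inner_right T w y).symm
  have h6 : ⟪T w, T w⟫ = ⟪w, adjoint T y⟫ := by
    rw [← adjoint_inner_right T w (T w), hTw]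
  have h7 : RCLike.re ⟪y, T w⟫ = ‖T w‖ ^ 2 := by
    rw [inner_re_symm, h5, ← h6, inner_self_eq_norm_sq]
  refine le_of_sq_le_sq' (norm_nonneg _) (norm_nonneg _) ?_
  rw [norm_sub_sq (𝕜 := ℂ), h7]
  nlinarith [sq_nonneg ‖T w‖]

end Aux

set_option maxHeartbeats 1600000 in
/-- Let `A` be an operator-valued frame for `H` with lower frame bound `α` and `B` a
`μ`-perturbation of `A`, `μ < √α`. Then `B` is an operator-valued frame for `H` and the
canonical duals satisfy `‖T_A S_A⁻¹ - T_B S_B⁻¹‖ ≤ 2μ/(√α(√α - μ))`. -/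
theorem canonical_duals_perturbation {H K : Type*}
    [NormedAddCommGroup H] [InnerProductSpace ℂ H] [CompleteSpace H]
    [NormedAddCommGroup K] [InnerProductSpace ℂ K] [CompleteSpace K]
    {I : Type*} [Countable I] (TA TB : H →L[ℂ] lp (fun _ : I => K) 2)
    (α : ℝ) (hα : 0 < α)
    (hframe : ∀ x : H, α * ‖x‖ ^ 2 ≤ ‖TA x‖ ^ 2)
    (μ : ℝ) (hμ : ‖TA - TB‖ ≤ μ) (hμα : μ < Real.sqrt α) :
    (∃ α' > 0, ∀ x : H, α' * ‖x‖ ^ 2 ≤ ‖TB x‖ ^ 2) ∧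
    ‖TA.comp (Ring.inverse ((adjoint TA).comp TA)) -
        TB.comp (Ring.inverse ((adjoint TB).comp TB))‖ ≤
      2 * μ / (Real.sqrt α * (Real.sqrt α - μ)) := by
  set c := Real.sqrt α with hc_def
  have hc : 0 < c := Real.sqrt_pos.mpr hα
  have hμ0 : 0 ≤ μ := le_trans (opNorm_nonneg (TA - TB)) hμ
  have hcμ : 0 < c - μ := sub_pos.mpr hμα
  -- pointwise lower bound for TA
  have hA : ∀ x, c * ‖x‖ ≤ ‖TA x‖ := by
    intro x
    refine le_of_sq_le_sq' (by positivity) (norm_nonneg _) ?_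
    rw [mul_pow, hc_def, Real.sq_sqrt hα.le]
    exact hframe x
  -- pointwise lower bound for TB
  have hB : ∀ x, (c - μ) * ‖x‖ ≤ ‖TB x‖ := by
    intro x
    have h1 : ‖TA x - TB x‖ ≤ μ * ‖x‖ := by
      calc ‖TA x - TB x‖ = ‖(TA - TB) x‖ := by simp
        _ ≤ ‖TA - TB‖ * ‖x‖ := le_opNorm _ _
        _ ≤ μ * ‖x‖ := mul_le_mul_of_nonneg_right hμ (norm_nonneg x)
    have h2 := hA x
    have h3 := norm_sub_norm_le (TA x) (TB x)
    rw [sub_mul]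
    linarith
  constructor
  · refine ⟨(c - μ) ^ 2, by positivity, fun x => ?_⟩
    have := pow_le_pow_left₀ (by positivity : (0:ℝ) ≤ (c - μ) * ‖x‖) (hB x) 2
    rwa [mul_pow] at this
  -- main estimate
  set SA' := Ring.inverse ((adjoint TA).comp TA) with hSA'
  set SB' := Ring.inverse ((adjoint TB).comp TB) with hSB'
  set D1 := TA.comp SA' with hD1
  set D2 := TB.comp SB' with hD2
  set PB := (TB.comp SB').comp (adjoint TB) with hPB
  have hA2 : ∀ z, adjoint TA (TA (SA' z)) = z := fun z => by
    have := S_inv_cancel_right hc hA z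
    simpa [ContinuousLinearMap.comp_apply] using this
  have hB1 : ∀ z, SB' (adjoint TB (TB z)) = z := fun z => by
    have := S_inv_cancel_left hcμ hB z
    simpa [ContinuousLinearMap.comp_apply] using this
  have key : D1 - D2 = ((1 - PB).comp ((TA - TB).comp SA')) +
      (D2.comp ((adjoint (TB - TA)).comp D1)) := by
    ext x
    simp only [ContinuousLinearMap.sub_apply, ContinuousLinearMap.add_apply,
      ContinuousLinearMap.comp_apply, ContinuousLinearMap.one_apply, map_sub,
      hD1, hD2, hPB, hA2, hB1]
    abel
  rw [key]
  refine opNorm_le_bound _ (by positivity) fun x => ?_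
  have hterm1 : ‖((1 - PB).comp ((TA - TB).comp SA')) x‖ ≤ μ * ((c ^ 2)⁻¹ * ‖x‖) := by
    have hu : ‖(TA - TB) (SA' x)‖ ≤ μ * ((c ^ 2)⁻¹ * ‖x‖) := by
      calc ‖(TA - TB) (SA' x)‖ ≤ ‖TA - TB‖ * ‖SA' x‖ := le_opNorm _ _
        _ ≤ μ * ((c ^ 2)⁻¹ * ‖x‖) := by
            have := inv_apply_bound hc hA x
            have := norm_nonneg (SA' x)
            nlinarith [norm_nonneg (TA - TB), opNorm_nonneg (TA - TB)]
    calc ‖((1 - PB).comp ((TA - TB).comp SA')) x‖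
        = ‖(TA - TB) (SA' x) - TB (SB' (adjoint TB ((TA - TB) (SA' x))))‖ := by
          simp only [ContinuousLinearMap.comp_apply, ContinuousLinearMap.sub_apply,
            ContinuousLinearMap.one_apply, hPB]
      _ ≤ ‖(TA - TB) (SA' x)‖ := by
          rw [ContinuousLinearMap.sub_apply]
          exact proj_apply_bound hcμ hB _
      _ ≤ μ * ((c ^ 2)⁻¹ * ‖x‖) := hu
  have hterm2 : ‖(D2.comp ((adjoint (TB - TA)).comp D1)) x‖ ≤
      (c - μ)⁻¹ * (μ * (c⁻¹ * ‖x‖)) := by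
    have hd1 : ‖D1 x‖ ≤ c⁻¹ * ‖x‖ := TSinv_apply_bound hc hA x
    have hadj : ‖adjoint (TB - TA) (D1 x)‖ ≤ μ * (c⁻¹ * ‖x‖) := by
      calc ‖adjoint (TB - TA) (D1 x)‖ ≤ ‖adjoint (TB - TA)‖ * ‖D1 x‖ := le_opNorm _ _
        _ ≤ μ * (c⁻¹ * ‖x‖) := by
            have hn : ‖adjoint (TB - TA)‖ = ‖TA - TB‖ := by
              rw [ContinuousLinearMap.adjoint.norm_map (TB - TA), norm_sub_rev]
            rw [hn]
            have := norm_nonneg (D1 x)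
            nlinarith [opNorm_nonneg (TA - TB)]
    calc ‖(D2.comp ((adjoint (TB - TA)).comp D1)) x‖
        = ‖TB (SB' (adjoint (TB - TA) (D1 x)))‖ := by
          simp [ContinuousLinearMap.comp_apply, hD2]
      _ ≤ (c - μ)⁻¹ * ‖adjoint (TB - TA) (D1 x)‖ := TSinv_apply_bound hcμ hB _
      _ ≤ (c - μ)⁻¹ * (μ * (c⁻¹ * ‖x‖)) := by
          nlinarith [inv_nonneg.mpr hcμ.le]
  have harith : μ * (c ^ 2)⁻¹ + (c - μ)⁻¹ * (μ * c⁻¹) ≤ 2 * μ / (c * (c - μ)) := by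
    have h1 : μ * (c ^ 2)⁻¹ ≤ μ / (c * (c - μ)) := by
      rw [← div_eq_mul_inv]
      apply div_le_div_of_nonneg_left hμ0 (by positivity)
      nlinarith
    have h2 : (c - μ)⁻¹ * (μ * c⁻¹) = μ / (c * (c - μ)) := by
      rw [div_eq_mul_inv, mul_inv]
      ring
    rw [show 2 * μ / (c * (c - μ)) = μ / (c * (c - μ)) + μ / (c * (c - μ)) by ring]
    linarith
  calc ‖(((1 - PB).comp ((TA - TB).comp SA')) + (D2.comp ((adjoint (TB - TA)).comp D1))) x‖
      ≤ ‖((1 - PB).comp ((TA - TB).comp SA')) x‖ +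
        ‖(D2.comp ((adjoint (TB - TA)).comp D1)) x‖ := by
        rw [ContinuousLinearMap.add_apply]; exact norm_add_le _ _
    _ ≤ μ * ((c ^ 2)⁻¹ * ‖x‖) + (c - μ)⁻¹ * (μ * (c⁻¹ * ‖x‖)) := add_le_add hterm1 hterm2
    _ ≤ 2 * μ / (c * (c - μ)) * ‖x‖ := by nlinarith [norm_nonneg x, harith]
end
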